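/- There exist finite sets of content points and utility functions such that the no-prompting best-response dynamics with collapsing beliefs converges to an equilibrium whose social welfare is an arbitrarily small fraction of the optimum. Concretely: for every ε > 0 there exist two points {1,2}, true utilities E₁ > E₂ > 0 with E₂/E₁ < ε, and initial estimates f₁, f₂ with f₂ > E₁ > E₂ > f₁, such that the best-response dynamics (choose argmax of current estimate, then collapse estimate of chosen point to its true value) converges to point 2 and never visits point 1. -/
import Mathlib


/-- No-prompting best-response dynamics can converge to an equilibrium with
arbitrarily small fraction of the optimal welfare. -/
theorem stmt3 : ∀ ε : ℝ, ε > 0 →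
    ∃ E f : Fin 2 → ℝ, E 0 > E 1 ∧ E 1 > 0 ∧ E 1 / E 0 < ε ∧
      f 1 > E 0 ∧ E 1 > f 0 ∧
      ∀ (pick : (Fin 2 → ℝ) → Fin 2), (∀ (g : Fin 2 → ℝ) (j : Fin 2), g j ≤ g (pick g)) →
        ∀ (g : ℕ → Fin 2 → ℝ), g 0 = f →
          (∀ t, g (t + 1) = Function.update (g t) (pick (g t)) (E (pick (g t)))) →
          ∀ t, pick (g t) = 1 := by
  intro ε hε
  set m : ℝ := min ε 1 / 2 with hm
  have hm0 : 0 < m := by positivity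
  have hm1 : m < 1 := by
    have : min ε 1 ≤ 1 := min_le_right _ _
    linarith
  have hmε : m < ε := by
    have h1 : min ε 1 / 2 < min ε 1 := by
      have : 0 < min ε 1 := lt_min hε one_pos
      linarith
    have h2 : min ε 1 ≤ ε := min_le_left _ _
    linarith
  refine ⟨![1, m], ![m / 2, 2], by simpa using hm1, by simpa using hm0, ?_, ?_, ?_, ?_⟩
  · simpa using hmε
  · norm_num
  · simp; linarith
  intro pick hpick g hg0 hstep
  -- key: if g 0 < g 1 then pick g = 1
  have key : ∀ h : Fin 2 → ℝ, h 0 < h 1 → pick h = 1 := by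
    intro h hh
    have := hpick h 1
    by_contra hne
    have h0 : pick h = 0 := by omega
    rw [h0] at this; linarith
  have hlt : ∀ t, g t 0 < g t 1 ∧ g t = if t = 0 then ![m/2, 2]
      else Function.update ![m/2, 2] 1 m := by
    intro t
    induction t with
    | zero => refine ⟨?_, by simpa using hg0⟩; rw [hg0]; simp; linarith
    | succ n ih =>
      obtain ⟨hlt, heq⟩ := ih
      have hp := key _ hlt
      have hstepn := hstep n
      rw [hp] at hstepn
      rcases Nat.eq_zero_or_pos n with h0 | h0
      · subst h0
        simp only [if_pos rfl] at heq
        rw [heq] at hstepn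
        constructor
        · rw [hstepn]; simp [Function.update]; linarith
        · simp [hstepn]
      · have : n ≠ 0 := by omega
        simp only [if_neg this] at heq
        rw [heq] at hstepn
        have hid : Function.update (Function.update ![m/2, 2] 1 m) 1 (![(1:ℝ), m] 1)
            = Function.update ![m/2, 2] 1 m := by
          simp [Function.update_idem]
        rw [hid] at hstepn
        constructor
        · rw [hstepn]; simp [Function.update]; linarith
        · simp [hstepn]
  intro t
  exact key _ (hlt t).1
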